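/- arXiv:1808.03189 — 4 statements merged into one kernel-verified Lean document; each statement's English description precedes it below -/
import Mathlib

section
/- Let I ⊆ S = K[x_1,...,x_n] be a monomial ideal and suppose there exists an integer s ≥ 1 such that the integral closure of I^k equals I^{k-s} · (integral closure of I^s) for all k ≥ s. Then for every integer k ≥ 1, the k-th power of the integral closure of I^s equals the integral closure of I^{ks}. -/
open MvPolynomial

def IsIntegralOverIdeal {R : Type*} [CommRing R] (I : Ideal R) (f : R) : Prop :=
  ∃ k : ℕ, 0 < k ∧ ∃ c : ℕ → R, (∀ i ∈ Finset.Icc 1 k, c i ∈ I ^ i) ∧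
    f ^ k + ∑ i ∈ Finset.Icc 1 k, c i * f ^ (k - i) = 0

lemma aux1 {R : Type*} [CommRing R] (J : Ideal R) (f : R) (t : ℕ) :
    Ideal.span {f} * (J + Ideal.span {f})^t ≤
      J * (J + Ideal.span {f})^t + Ideal.span {f^(t+1)} := by
  induction t with
  | zero => simp
  | succ t ih =>
    set Jf := J + Ideal.span {f} with hJf
    have hsp : Ideal.span {f^(t+1)} ≤ Jf ^ (t+1) := by
      rw [← Ideal.span_singleton_pow]
      exact Ideal.pow_right_mono le_sup_right _
    have step3 : Ideal.span {f^(t+1)} * Jf ≤ J * Jf^(t+1) + Ideal.span {f^(t+2)} := by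
      rw [hJf, mul_add]
      rw [Submodule.add_eq_sup, Submodule.add_eq_sup]
      apply sup_le
      · apply le_sup_of_le_left
        rw [mul_comm]
        exact Ideal.mul_mono le_rfl hsp
      · apply le_sup_of_le_right
        rw [Ideal.span_singleton_mul_span_singleton, ← pow_succ]
    calc Ideal.span {f} * Jf ^ (t+1)
        = (Ideal.span {f} * Jf ^ t) * Jf := by rw [pow_succ, mul_assoc]
      _ ≤ (J * Jf ^ t + Ideal.span {f^(t+1)}) * Jf := Ideal.mul_mono ih le_rfl
      _ = J * Jf ^ (t+1) + Ideal.span {f^(t+1)} * Jf := by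
          rw [add_mul, pow_succ Jf t, mul_assoc]
      _ ≤ J * Jf ^ (t+1) + (J * Jf^(t+1) + Ideal.span {f^(t+2)}) := add_le_add le_rfl step3
      _ = J * Jf ^ (t+1) + Ideal.span {f^(t+1+1)} := by
          rw [Submodule.add_eq_sup, Submodule.add_eq_sup, ← sup_assoc, sup_idem]

/-- From an integral equation we get an ideal `N` with `f^t ∈ N` and `f·N ⊆ J·N`. -/
lemma exists_ideal {R : Type*} [CommRing R] {J : Ideal R} {f : R}
    (hf : IsIntegralOverIdeal J f) :
    ∃ (N : Ideal R) (t : ℕ), f ^ t ∈ N ∧ Ideal.span {f} * N ≤ J * N := by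
  obtain ⟨m, hm, c, hc, heq⟩ := hf
  set Jf := J + Ideal.span {f} with hJf
  refine ⟨Jf ^ (m-1), m-1, ?_, ?_⟩
  · have : Ideal.span {f} ^ (m-1) ≤ Jf ^ (m-1) := Ideal.pow_right_mono le_sup_right _
    exact this (by rw [Ideal.span_singleton_pow]; exact Ideal.mem_span_singleton_self _)
  · -- first: f^m ∈ J * Jf^(m-1)
    have hfm : f ^ m ∈ J * Jf ^ (m-1) := by
      have h2 : f ^ m = ∑ i ∈ Finset.Icc 1 m, -(c i * f ^ (m - i)) := by
        rw [Finset.sum_neg_distrib]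
        linear_combination heq
      rw [h2]
      apply Submodule.sum_mem
      intro i hi
      apply Submodule.neg_mem
      obtain ⟨hi1, hi2⟩ := Finset.mem_Icc.mp hi
      have hmem : c i * f ^ (m - i) ∈ J ^ i * Ideal.span {f ^ (m-i)} :=
        Ideal.mul_mem_mul (hc i hi) (Ideal.mem_span_singleton_self _)
      refine Set.mem_of_mem_of_subset hmem ?_
      have h3 : J ^ i = J * J ^ (i - 1) := by
        conv_lhs => rw [show i = (i-1) + 1 by omega]
        rw [pow_succ, mul_comm]
      rw [h3, mul_assoc]
      apply Ideal.mul_mono le_rfl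
      calc J ^ (i-1) * Ideal.span {f ^ (m-i)}
          ≤ Jf ^ (i-1) * Jf ^ (m-i) := by
            apply Ideal.mul_mono (Ideal.pow_right_mono le_sup_left _)
            rw [← Ideal.span_singleton_pow]
            exact Ideal.pow_right_mono le_sup_right _
        _ = Jf ^ (m-1) := by rw [← pow_add]; congr 1; omega
    calc Ideal.span {f} * Jf ^ (m-1)
        ≤ J * Jf ^ (m-1) + Ideal.span {f ^ (m-1+1)} := aux1 J f (m-1)
      _ ≤ J * Jf ^ (m-1) := by
          rw [Submodule.add_eq_sup]
          apply sup_le le_rfl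
          rw [Ideal.span_le, Set.singleton_subset_iff, show m - 1 + 1 = m by omega]
          exact hfm

lemma det_trick {R : Type*} [CommRing R] [IsDomain R] [IsNoetherianRing R]
    {J N : Ideal R} {a x0 : R} (hx0 : x0 ∈ N) (hx0ne : x0 ≠ 0)
    (h : Ideal.span {a} * N ≤ J * N) : IsIntegralOverIdeal J a := by
  haveI : Module.Finite R ↥N := Module.Finite.iff_fg.mpr (IsNoetherian.noetherian N)
  have hsmul : ∀ x ∈ N, (LinearMap.lsmul R R a) x ∈ N := by
    intro x hx
    have : a * x ∈ Ideal.span {a} * N :=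
      Ideal.mul_mem_mul (Ideal.mem_span_singleton_self a) hx
    simpa using Ideal.mul_le_right (h this)
  set φ : ↥N →ₗ[R] ↥N := (LinearMap.lsmul R R a).restrict hsmul with hφ
  have hφ_apply : ∀ x : ↥N, (φ x : R) = a * ↑x := by
    intro x; simp [hφ, LinearMap.restrict_apply, smul_eq_mul]
  have hrange : LinearMap.range φ ≤ J • (⊤ : Submodule R ↥N) := by
    rintro _ ⟨x, rfl⟩
    rw [Submodule.mem_smul_top_iff, Ideal.smul_eq_mul]
    rw [hφ_apply]
    exact h (Ideal.mul_mem_mul (Ideal.mem_span_singleton_self a) x.2)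
  obtain ⟨p, hmonic, -, hcoeff, haeval⟩ :=
    LinearMap.exists_monic_and_coeff_mem_pow_and_aeval_eq_zero_of_range_le_smul R φ J hrange
  have heval : ∀ (q : Polynomial R) (x : ↥N),
      ((Polynomial.aeval φ q) x : R) = Polynomial.eval a q * ↑x := by
    intro q
    induction q using Polynomial.induction_on with
    | C r => intro x; simp [Module.algebraMap_end_apply]
    | add q r hq hr => intro x; simp [map_add, hq, hr, add_mul, LinearMap.add_apply]
    | monomial n r hn =>
      intro x
      have : (Polynomial.C r * Polynomial.X ^ (n+1) : Polynomial R)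
          = (Polynomial.C r * Polynomial.X ^ n) * Polynomial.X := by ring
      rw [this, map_mul, Polynomial.aeval_X]
      have happ : (Polynomial.aeval φ (Polynomial.C r * Polynomial.X ^ n) * φ) x
          = (Polynomial.aeval φ (Polynomial.C r * Polynomial.X ^ n)) (φ x) := rfl
      rw [happ, hn, hφ_apply]
      simp only [Polynomial.eval_mul, Polynomial.eval_pow, Polynomial.eval_X, Polynomial.eval_C,
        pow_succ]
      ring
  have heval0 : Polynomial.eval a p * x0 = 0 := by
    have := heval p ⟨x0, hx0⟩
    rw [haeval] at this
    simpa using this.symm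
  have hpeval : Polynomial.eval a p = 0 := by
    rcases mul_eq_zero.mp heval0 with h' | h'
    · exact h'
    · exact absurd h' hx0ne
  set d := p.natDegree with hd
  have hd1 : 0 < d := by
    rcases Nat.eq_zero_or_pos d with h0 | h0
    · exfalso
      have : p = 1 := (Polynomial.Monic.natDegree_eq_zero hmonic).mp h0
      rw [this] at hpeval
      simpa using hpeval
    · exact h0
  refine ⟨d, hd1, fun i => p.coeff (d - i), ?_, ?_⟩
  · intro i hi
    obtain ⟨hi1, hi2⟩ := Finset.mem_Icc.mp hi
    have := hcoeff (d - i)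
    rwa [Nat.sub_sub_self hi2] at this
  · have hsum : ∑ i ∈ Finset.Icc 1 d, p.coeff (d - i) * a ^ (d - i)
        = ∑ j ∈ Finset.range d, p.coeff j * a ^ j := by
      refine Finset.sum_nbij' (fun i => d - i) (fun j => d - j) ?_ ?_ ?_ ?_ ?_
      · intro i hi
        obtain ⟨h1, h2⟩ := Finset.mem_Icc.mp hi
        simp only [Finset.mem_range]
        omega
      · intro j hj
        have := Finset.mem_range.mp hj
        simp only [Finset.mem_Icc]
        omega
      · intro i hi
        obtain ⟨h1, h2⟩ := Finset.mem_Icc.mp hi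
        omega
      · intro j hj
        have := Finset.mem_range.mp hj
        omega
      · intro i hi; rfl
    rw [hsum]
    have := Polynomial.eval_eq_sum_range (p := p) a
    rw [Finset.sum_range_succ, hmonic.coeff_natDegree, one_mul] at this
    rw [hpeval] at this
    linear_combination -this

lemma mult_lemma {R : Type*} [CommRing R] [IsDomain R] [IsNoetherianRing R]
    (J : Ideal R) {f g : R} (hf : IsIntegralOverIdeal J f) (hg : IsIntegralOverIdeal J g) :
    IsIntegralOverIdeal (J ^ 2) (f * g) := by
  by_cases hfg : f * g = 0
  · exact ⟨1, one_pos, fun _ => 0, by simp, by simp [hfg]⟩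
  · have hf0 : f ≠ 0 := fun h => hfg (by rw [h, zero_mul])
    have hg0 : g ≠ 0 := fun h => hfg (by rw [h, mul_zero])
    obtain ⟨Nf, tf, hmemf, hmulf⟩ := exists_ideal hf
    obtain ⟨Ng, tg, hmemg, hmulg⟩ := exists_ideal hg
    have hx0 : f ^ tf * g ^ tg ∈ Nf * Ng := Ideal.mul_mem_mul hmemf hmemg
    have hx0ne : f ^ tf * g ^ tg ≠ 0 :=
      mul_ne_zero (pow_ne_zero _ hf0) (pow_ne_zero _ hg0)
    refine det_trick hx0 hx0ne ?_
    calc Ideal.span {f * g} * (Nf * Ng)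
        = (Ideal.span {f} * Nf) * (Ideal.span {g} * Ng) := by
          rw [← Ideal.span_singleton_mul_span_singleton, mul_mul_mul_comm]
      _ ≤ (J * Nf) * (J * Ng) := Ideal.mul_mono hmulf hmulg
      _ = J ^ 2 * (Nf * Ng) := by rw [pow_two, mul_mul_mul_comm]

/-- `Ibar` is the integral closure of the ideal `I`. -/
def IsIntClosureOf {R : Type*} [CommRing R] (I Ibar : Ideal R) : Prop :=
  ∀ f, f ∈ Ibar ↔ IsIntegralOverIdeal I f

/-- An ideal of `K[x_1,…,x_n]` generated by monomials. -/
def IsMonomialIdeal {n : ℕ} {K : Type*} [Field K] (I : Ideal (MvPolynomial (Fin n) K)) : Prop :=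
  ∃ A : Set (Fin n →₀ ℕ),
    I = Ideal.span ((fun d => (monomial d 1 : MvPolynomial (Fin n) K)) '' A)

/-- if `\overline{I^k} = I^{k-s}·\overline{I^s}` for all `k ≥ s`, then
`(\overline{I^s})^k = \overline{I^{ks}}` for every `k ≥ 1`. -/
theorem pow_intClosure_eq {n : ℕ} {K : Type*} [Field K]
    (I : Ideal (MvPolynomial (Fin n) K)) (hI : IsMonomialIdeal I)
    (s : ℕ) (hs : 1 ≤ s)
    (bar : ℕ → Ideal (MvPolynomial (Fin n) K))
    (hbar : ∀ k, IsIntClosureOf (I ^ k) (bar k))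
    (hst : ∀ k, s ≤ k → bar k = I ^ (k - s) * bar s) :
    ∀ k, 1 ≤ k → (bar s) ^ k = bar (k * s) := by
  have pow_le_bar : ∀ m, I ^ m ≤ bar m := by
    intro m f hf
    refine (hbar m f).mpr ⟨1, one_pos, fun _ => -f, ?_, ?_⟩
    · intro i hi
      simp only [Finset.mem_Icc] at hi
      have : i = 1 := by omega
      rw [this, pow_one]
      exact Submodule.neg_mem _ hf
    · simp
  have key : bar s * bar s = I ^ s * bar s := by
    apply le_antisymm
    · have h1 : bar s * bar s ≤ bar (2 * s) := by
        rw [Ideal.mul_le]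
        intro f hf g hg
        refine (hbar (2 * s) _).mpr ?_
        have := mult_lemma (I ^ s) ((hbar s f).mp hf) ((hbar s g).mp hg)
        rwa [← pow_mul, show s * 2 = 2 * s by ring] at this
      have h2 : bar (2 * s) = I ^ s * bar s := by
        rw [hst (2 * s) (by omega), show 2 * s - s = s by omega]
      rw [← h2]; exact h1
    · exact Ideal.mul_mono (pow_le_bar s) le_rfl
  intro k hk
  induction k, hk using Nat.le_induction with
  | base => rw [pow_one, one_mul]
  | succ k hk ih =>
    have hks : s ≤ k * s := by nlinarith
    calc (bar s) ^ (k + 1) = (bar s) ^ k * bar s := by rw [pow_succ]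
      _ = bar (k * s) * bar s := by rw [ih]
      _ = I ^ (k * s - s) * (bar s * bar s) := by rw [hst (k * s) hks, mul_assoc]
      _ = I ^ (k * s - s) * (I ^ s * bar s) := by rw [key]
      _ = (I ^ (k * s - s) * I ^ s) * bar s := by rw [mul_assoc]
      _ = I ^ (k * s) * bar s := by rw [← pow_add]; congr 2; omega
      _ = bar ((k + 1) * s) := by
          rw [hst ((k + 1) * s) (by nlinarith), show (k + 1) * s - s = k * s by ring_nf; omega]
end

section
/- Let I be a monomial ideal in S = K[x_1,...,x_n] and suppose J ⊆ I is an ideal such that \overline{I^{ℓ}} = J · \overline{I^{ℓ-1}} for some integer ℓ ≥ 1, where m = μ(\overline{I^{ℓ-1}}) is the number of minimal monomial generators of \overline{I^{ℓ-1}}. If u is a monomial in the integral closure \overline{I} of I, then there exists an integer t with 1 ≤ t ≤ m such that u^t ∈ I^t. -/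
open MvPolynomial
open Pointwise

def IsMono {n : ℕ} {K : Type*} [Field K] (u : MvPolynomial (Fin n) K) : Prop :=
  ∃ d : Fin n →₀ ℕ, u = monomial d 1

/-- `G` is the (unique) minimal monomial generating set of the monomial ideal `J`. -/
def IsMinimalMonomialGens {n : ℕ} {K : Type*} [Field K] (G : Finset (Fin n →₀ ℕ))
    (J : Ideal (MvPolynomial (Fin n) K)) : Prop :=
  Ideal.span ((fun d => (monomial d 1 : MvPolynomial (Fin n) K)) '' ↑G) = J ∧
    ∀ d ∈ G, (monomial d 1 : MvPolynomial (Fin n) K) ∉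
      Ideal.span ((fun e => (monomial e 1 : MvPolynomial (Fin n) K)) '' ↑(G.erase d))

/-- Determinant trick with degree control: if `u·N ⊆ I·N` for an ideal `N` spanned by
`c : ι → R`, there is a monic polynomial `p` of degree `card ι` with `coeff k ∈ I^(deg-k)`
that kills `N` when evaluated at `u`. -/
lemma detTrick {R : Type*} [CommRing R] [Nontrivial R] {ι : Type*} [Fintype ι] [DecidableEq ι]
    (N I : Ideal R) (c : ι → R) (hspan : Ideal.span (Set.range c) = N)
    (u : R) (hmul : ∀ x ∈ N, u * x ∈ I * N) :
    ∃ p : Polynomial R, p.Monic ∧ p.natDegree = Fintype.card ι ∧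
      (∀ k, p.coeff k ∈ I ^ (p.natDegree - k)) ∧ ∀ x ∈ N, Polynomial.eval u p * x = 0 := by
  classical
  have hcN : ∀ i, c i ∈ N := fun i => hspan ▸ Ideal.subset_span ⟨i, rfl⟩
  set b : ι → ↥N := fun i => (⟨c i, hcN i⟩ : ↥N) with hbdef
  have hb : Submodule.span R (Set.range b) = ⊤ := by
    apply Submodule.map_injective_of_injective N.injective_subtype
    rw [Submodule.map_span, Submodule.map_top, Submodule.range_subtype]
    have himg : (⇑(Submodule.subtype N) '' Set.range b) = Set.range c := by
      ext x
      constructor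
      · rintro ⟨y, ⟨i, rfl⟩, rfl⟩; exact ⟨i, rfl⟩
      · rintro ⟨i, rfl⟩; exact ⟨b i, ⟨i, rfl⟩, rfl⟩
    rw [himg]
    exact hspan
  have hmulN : ∀ x ∈ N, u * x ∈ N := fun x hx => Ideal.mul_le_right (hmul x hx)
  set f : Module.End R ↥N :=
    (LinearMap.mul R R u).restrict (p := (N : Submodule R R)) (q := (N : Submodule R R))
      (fun x hx => hmulN x hx) with hfdef
  have hfcoe : ∀ x : ↥N, ((f x : R)) = u * (x : R) := fun x => rfl
  have hrange : LinearMap.range f ≤ (I • ⊤ : Submodule R ↥N) := by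
    rintro _ ⟨x, rfl⟩
    have h1 : ((f x : R)) ∈ I • (N : Submodule R R) := by
      rw [Ideal.smul_eq_mul]; rw [hfcoe]; exact hmul x x.2
    have h2 : Submodule.map N.subtype (I • (⊤ : Submodule R ↥N))
        = I • (N : Submodule R R) := by
      rw [Submodule.map_smul'', Submodule.map_top, Submodule.range_subtype]
    rw [← h2] at h1
    obtain ⟨y, hy, hy2⟩ := h1
    have : y = f x := Subtype.ext hy2
    exact this ▸ hy
  obtain ⟨A, HA, hA⟩ := Matrix.isRepresentation.toEnd_exists_mem_ideal R b hb f I hrange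
  have hdeg : (A.1).charpoly.natDegree = Fintype.card ι :=
    Matrix.charpoly_natDegree_eq_dim _
  have haev : Polynomial.aeval f (A.1).charpoly = 0 := by
    rw [← HA, Polynomial.aeval_algHom_apply,
      ← map_zero (Matrix.isRepresentation.toEnd R b hb)]
    congr 1
    ext1
    rw [Polynomial.aeval_subalgebra_coe, Matrix.aeval_self_charpoly, Subalgebra.coe_zero]
  refine ⟨A.1.charpoly, A.1.charpoly_monic, hdeg, ?_, ?_⟩
  · intro k
    rw [hdeg]
    exact Matrix.coeff_charpoly_mem_ideal_pow hA k
  · intro x hx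
    have hfn : ∀ (m : ℕ) (y : ↥N), (((f ^ m) y : R)) = u ^ m * (y : R) := by
      intro m
      induction m with
      | zero => intro y; simp
      | succ m ih =>
        intro y
        rw [pow_succ, Module.End.mul_apply, ih, hfcoe, pow_succ]
        ring
    have key : ∀ q : Polynomial R, (((Polynomial.aeval f q) ⟨x, hx⟩ : R))
        = Polynomial.eval u q * x := by
      intro q
      induction q using Polynomial.induction_on' with
      | add p q hp hq =>
        rw [map_add, Polynomial.eval_add, LinearMap.add_apply, Submodule.coe_add, hp, hq, add_mul]
      | monomial m a =>
        rw [Polynomial.aeval_monomial, Polynomial.eval_monomial, Module.End.mul_apply,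
          Module.algebraMap_end_apply, Submodule.coe_smul, hfn, smul_eq_mul]
        ring
    have := key A.1.charpoly
    rw [haev] at this
    simpa using this.symm

/-- From a vanishing monic polynomial, extract the bespoke integral equation. -/
lemma integral_of_eval {R : Type*} [CommRing R] (I : Ideal R) (u : R) (p : Polynomial R)
    (hmo : p.Monic) (h0 : 0 < p.natDegree) (hc : ∀ k, p.coeff k ∈ I ^ (p.natDegree - k))
    (he : Polynomial.eval u p = 0) : IsIntegralOverIdeal I u := by
  set k := p.natDegree with hk
  refine ⟨k, h0, fun i => p.coeff (k - i), ?_, ?_⟩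
  · intro i hi
    have := hc (k - i)
    rwa [Nat.sub_sub_self (Finset.mem_Icc.mp hi).2] at this
  · rw [Polynomial.eval_eq_sum_range, Finset.sum_range_succ] at he
    have hlead : p.coeff k = 1 := hmo
    rw [hlead, one_mul] at he
    rw [← he, add_comm]
    congr 1
    refine Finset.sum_nbij' (fun i => k - i) (fun j => k - j) ?_ ?_ ?_ ?_ ?_
    · intro a ha
      have := Finset.mem_Icc.mp ha
      simp only [Finset.mem_range]
      omega
    · intro a ha
      have := Finset.mem_range.mp ha
      simp only [Finset.mem_Icc]
      omega
    · intro a ha; have := Finset.mem_Icc.mp ha; omega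
    · intro a ha; have := Finset.mem_range.mp ha; omega
    · intro a _; rfl

/-- Every element of `I` is integral over `I`. -/
lemma isIntegral_self {R : Type*} [CommRing R] (I : Ideal R) {x : R} (hx : x ∈ I) :
    IsIntegralOverIdeal I x := by
  refine ⟨1, one_pos, fun _ => -x, ?_, ?_⟩ <;> simp [hx]

lemma idealSum_le_of_forall {R : Type*} [CommRing R] {α : Type*} {s : Finset α}
    {f : α → Ideal R} {C : Ideal R} (h : ∀ i ∈ s, f i ≤ C) : ∑ i ∈ s, f i ≤ C := by
  classical
  induction s using Finset.induction with
  | empty => simp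
  | @insert a s hnot ih =>
    rw [Finset.sum_insert hnot, Submodule.add_eq_sup]
    exact sup_le (h a (Finset.mem_insert_self a s))
      (ih fun i hi => h i (Finset.mem_insert_of_mem hi))

/-- If `u` is integral over `A`, there is an ideal `Mu ⊇ A^k` with `u·Mu ⊆ A·Mu`. -/
lemma exists_ideal_of_integral {R : Type*} [CommRing R] (A : Ideal R) (u : R)
    (h : IsIntegralOverIdeal A u) :
    ∃ (Mu : Ideal R) (k : ℕ), A ^ k ≤ Mu ∧ Ideal.span {u} * Mu ≤ A * Mu := by
  obtain ⟨k, hk, c, hc, heq⟩ := h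
  set Mu : Ideal R := ∑ i ∈ Finset.range k, A ^ (k - 1 - i) * Ideal.span {u ^ i} with hMu
  have hterm : ∀ i ∈ Finset.range k, A ^ (k - 1 - i) * Ideal.span {u ^ i} ≤ Mu := by
    intro i hi
    rw [hMu]
    exact Finset.single_le_sum (f := fun i => A ^ (k - 1 - i) * Ideal.span {u ^ i})
      (fun _ _ => bot_le) hi
  refine ⟨Mu, k - 1, ?_, ?_⟩
  · have h0 : (0 : ℕ) ∈ Finset.range k := Finset.mem_range.mpr hk
    have : A ^ (k - 1) = A ^ (k - 1 - 0) * Ideal.span {u ^ 0} := by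
      rw [Nat.sub_zero, pow_zero, Ideal.span_singleton_one, Ideal.mul_top]
    rw [this]
    exact hterm 0 h0
  · have hre : ∀ i, Ideal.span {u} * (A ^ (k - 1 - i) * Ideal.span {u ^ i})
        = A ^ (k - 1 - i) * Ideal.span {u ^ (i + 1)} := by
      intro i
      rw [← mul_assoc, mul_comm (Ideal.span {u}) (A ^ (k - 1 - i)), mul_assoc,
        Ideal.span_singleton_mul_span_singleton, ← pow_succ']
    rw [hMu, Finset.mul_sum]
    apply idealSum_le_of_forall
    intro i hi
    rw [hre]
    rcases Nat.lt_or_ge (i + 1) k with hik | hik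
    · have h1 : k - 1 - i = (k - 1 - (i + 1)) + 1 := by omega
      rw [h1, pow_succ', mul_assoc]
      exact Ideal.mul_mono le_rfl (hterm (i + 1) (Finset.mem_range.mpr hik))
    · have hik2 : i + 1 = k := by
        have := Finset.mem_range.mp hi; omega
      have hz : k - 1 - i = 0 := by omega
      rw [hz, pow_zero, one_mul, hik2, Ideal.span_singleton_le_iff_mem]
      have huk : u ^ k = -∑ j ∈ Finset.Icc 1 k, c j * u ^ (k - j) :=
        eq_neg_of_add_eq_zero_left heq
      rw [huk]
      apply neg_mem
      apply Ideal.sum_mem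
      intro j hj
      obtain ⟨hj1, hj2⟩ := Finset.mem_Icc.mp hj
      have hcj : c j ∈ A ^ j := hc j hj
      have hle : A ^ j * Ideal.span {u ^ (k - j)} ≤ A * Mu := by
        have hAj : A ^ j = A * A ^ (j - 1) := by
          conv_lhs => rw [show j = (j - 1) + 1 by omega]
          rw [pow_succ']
        rw [hAj, mul_assoc]
        refine Ideal.mul_mono le_rfl ?_
        have hkj : k - j ∈ Finset.range k := Finset.mem_range.mpr (by omega)
        have he2 : k - 1 - (k - j) = j - 1 := by omega
        exact he2 ▸ hterm (k - j) hkj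
      exact hle (Ideal.mul_mem_mul hcj (Ideal.mem_span_singleton_self _))


/-- products of integral elements are integral over the product ideal
(stated for powers of an ideal in a Noetherian domain). -/
lemma integral_mul {R : Type*} [CommRing R] [IsDomain R] [IsNoetherianRing R]
    (I : Ideal R) (a b : ℕ) (u v : R) (hI : I ≠ ⊥)
    (hu : IsIntegralOverIdeal (I ^ a) u) (hv : IsIntegralOverIdeal (I ^ b) v) :
    IsIntegralOverIdeal (I ^ (a + b)) (u * v) := by
  classical
  obtain ⟨Mu, ku, hMu1, hMu2⟩ := exists_ideal_of_integral _ _ hu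
  obtain ⟨Mv, kv, hMv1, hMv2⟩ := exists_ideal_of_integral _ _ hv
  set Q : Ideal R := Mu * Mv with hQ
  have hQle : Ideal.span {u * v} * Q ≤ I ^ (a + b) * Q := by
    calc Ideal.span {u * v} * Q = (Ideal.span {u} * Mu) * (Ideal.span {v} * Mv) := by
          rw [← Ideal.span_singleton_mul_span_singleton, hQ]; ring
      _ ≤ (I ^ a * Mu) * (I ^ b * Mv) := Ideal.mul_mono hMu2 hMv2
      _ = I ^ (a + b) * Q := by rw [pow_add, hQ]; ring
  obtain ⟨z, hz, hz0⟩ := (Submodule.ne_bot_iff I).mp hI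
  have hw : z ^ (a * ku + b * kv) ∈ Q := by
    have h1 : z ^ (a * ku) ∈ Mu := hMu1 (by rw [← pow_mul]; exact Ideal.pow_mem_pow hz _)
    have h2 : z ^ (b * kv) ∈ Mv := hMv1 (by rw [← pow_mul]; exact Ideal.pow_mem_pow hz _)
    rw [pow_add]
    exact Ideal.mul_mem_mul h1 h2
  have hw0 : z ^ (a * ku + b * kv) ≠ 0 := pow_ne_zero _ hz0
  obtain ⟨s, hs⟩ := IsNoetherian.noetherian (Q : Submodule R R)
  have hspan : Ideal.span (Set.range ((↑) : ↥(s : Finset R) → R)) = Q := by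
    rw [Subtype.range_coe]; exact hs
  have hmulQ : ∀ x ∈ Q, (u * v) * x ∈ I ^ (a + b) * Q := fun x hx =>
    hQle (Ideal.mul_mem_mul (Ideal.mem_span_singleton_self _) hx)
  obtain ⟨p, hmo, hdeg, hcf, hkill⟩ := detTrick Q (I ^ (a + b)) _ hspan (u * v) hmulQ
  have heval : Polynomial.eval (u * v) p = 0 := by
    have := hkill _ hw
    exact (mul_eq_zero.mp this).resolve_right hw0
  have h0 : 0 < p.natDegree := by
    by_contra hcon
    have : p = 1 := (Polynomial.Monic.natDegree_eq_zero hmo).mp (by omega)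
    rw [this] at heval
    simp at heval
  exact integral_of_eval _ _ p hmo h0 hcf heval

/-- every monomial of an element of a monomial-span ideal lies in the ideal -/
lemma monomial_coeff_mem {n : ℕ} {K : Type*} [Field K] (S : Set (MvPolynomial (Fin n) K))
    (hS : ∀ f ∈ S, ∃ e c, f = monomial e c) {f : MvPolynomial (Fin n) K}
    (hf : f ∈ Ideal.span S) (d : Fin n →₀ ℕ) :
    monomial d (MvPolynomial.coeff d f) ∈ Ideal.span S := by
  revert d
  induction hf using Submodule.span_induction with
  | mem x h =>
    intro d
    obtain ⟨e, cc, rfl⟩ := hS x h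
    rw [coeff_monomial]
    split_ifs with hed
    · subst hed; exact Ideal.subset_span h
    · rw [monomial_zero]; exact Ideal.zero_mem _
  | zero => intro d; simp
  | add x y hx hy ihx ihy =>
    intro d
    rw [MvPolynomial.coeff_add, map_add]
    exact Ideal.add_mem _ (ihx d) (ihy d)
  | smul a x hx ih =>
    intro d
    rw [smul_eq_mul, MvPolynomial.coeff_mul, map_sum]
    apply Ideal.sum_mem
    rintro ⟨e1, e2⟩ hpq
    have hd : e1 + e2 = d := Finset.HasAntidiagonal.mem_antidiagonal.mp hpq
    have : (monomial d (MvPolynomial.coeff e1 a * MvPolynomial.coeff e2 x)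
        : MvPolynomial (Fin n) K)
        = monomial e1 (MvPolynomial.coeff e1 a) * monomial e2 (MvPolynomial.coeff e2 x) := by
      rw [monomial_mul, hd]
    rw [this]
    exact Ideal.mul_mem_left _ _ (ih e2)

/-- if `\overline{I^ℓ} = J·\overline{I^{ℓ-1}}` with `J ⊆ I` and `m` is the
number of minimal monomial generators of `\overline{I^{ℓ-1}}`, then for every monomial
`u ∈ \overline{I}` there is `1 ≤ t ≤ m` with `u^t ∈ I^t`. -/
theorem exists_pow_mem_of_intClosure {n : ℕ} {K : Type*} [Field K]
    (I J : Ideal (MvPolynomial (Fin n) K)) (hI : IsMonomialIdeal I)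
    (ℓ : ℕ) (hℓ : 1 ≤ ℓ) (hJI : J ≤ I)
    (barl barlm1 barI : Ideal (MvPolynomial (Fin n) K))
    (h1 : IsIntClosureOf (I ^ ℓ) barl)
    (h2 : IsIntClosureOf (I ^ (ℓ - 1)) barlm1)
    (h3 : IsIntClosureOf I barI)
    (hfac : barl = J * barlm1)
    (G : Finset (Fin n →₀ ℕ)) (hG : IsMinimalMonomialGens G barlm1)
    (u : MvPolynomial (Fin n) K) (hu : IsMono u) (huI : u ∈ barI) :
    ∃ t : ℕ, 1 ≤ t ∧ t ≤ G.card ∧ u ^ t ∈ I ^ t := by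
  classical
  obtain ⟨d, rfl⟩ := hu
  have hu0 : (monomial d 1 : MvPolynomial (Fin n) K) ≠ 0 := by
    rw [Ne, monomial_eq_zero]; exact one_ne_zero
  have hIbot : I ≠ ⊥ := by
    intro hbot
    obtain ⟨k, hk, c, hc, heq⟩ := (h3 _).mp huI
    have hcz : ∀ i ∈ Finset.Icc 1 k, c i = 0 := by
      intro i hi
      have hmem := hc i hi
      rw [hbot] at hmem
      have h1 : (1 : ℕ) ≤ i := (Finset.mem_Icc.mp hi).1
      have hb : (⊥ : Ideal (MvPolynomial (Fin n) K)) ^ i ≤ ⊥ := by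
        calc (⊥ : Ideal (MvPolynomial (Fin n) K)) ^ i = ⊥ ^ (i - 1) * ⊥ := by
              rw [← pow_succ]; congr 1; omega
          _ ≤ ⊥ := Ideal.mul_le_right
      exact Ideal.mem_bot.mp (hb hmem)
    rw [Finset.sum_congr rfl (fun i hi => by rw [hcz i hi, zero_mul])] at heq
    simp only [Finset.sum_const_zero, add_zero] at heq
    exact hu0 ((pow_eq_zero_iff (by omega : k ≠ 0)).mp heq)
  obtain ⟨z, hz, hz0⟩ := (Submodule.ne_bot_iff I).mp hIbot
  -- Step 2: u · barlm1 ⊆ I · barlm1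
  have hmul12 : ∀ x ∈ barlm1, (monomial d 1 : MvPolynomial (Fin n) K) * x ∈ I * barlm1 := by
    intro x hx
    have hu1 : IsIntegralOverIdeal (I ^ 1) (monomial d 1 : MvPolynomial (Fin n) K) := by
      rw [pow_one]; exact (h3 _).mp huI
    have hux : IsIntegralOverIdeal (I ^ ℓ) ((monomial d 1 : MvPolynomial (Fin n) K) * x) := by
      have := integral_mul I 1 (ℓ - 1) _ x hIbot hu1 ((h2 x).mp hx)
      rwa [show 1 + (ℓ - 1) = ℓ by omega] at this
    have hb : (monomial d 1 : MvPolynomial (Fin n) K) * x ∈ barl := (h1 _).mpr hux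
    rw [hfac] at hb
    exact Ideal.mul_mono hJI le_rfl hb
  -- Step 3: determinant trick of degree G.card
  have himg : Set.range (fun g : ↥G =>
      (monomial (g : Fin n →₀ ℕ) 1 : MvPolynomial (Fin n) K))
      = (fun e => (monomial e 1 : MvPolynomial (Fin n) K)) '' ↑G := by
    ext x
    constructor
    · rintro ⟨g, rfl⟩; exact ⟨g.1, g.2, rfl⟩
    · rintro ⟨e, he, rfl⟩; exact ⟨⟨e, he⟩, rfl⟩
  have hspan : Ideal.span (Set.range (fun g : ↥G =>
      (monomial (g : Fin n →₀ ℕ) 1 : MvPolynomial (Fin n) K))) = barlm1 := by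
    rw [himg]; exact hG.1
  obtain ⟨p, hmo, hdeg, hcf, hkill⟩ := detTrick barlm1 I _ hspan (monomial d 1) hmul12
  have hdeg' : p.natDegree = G.card := by rw [hdeg, Fintype.card_coe]
  have hwmem : z ^ (ℓ - 1) ∈ barlm1 :=
    (h2 _).mpr (isIntegral_self _ (Ideal.pow_mem_pow hz _))
  have heval : Polynomial.eval (monomial d 1 : MvPolynomial (Fin n) K) p = 0 :=
    (mul_eq_zero.mp (hkill _ hwmem)).resolve_right (pow_ne_zero _ hz0)
  -- Step 4: coefficient extraction
  set m := G.card with hm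
  have hux : ∀ i : ℕ, (monomial d 1 : MvPolynomial (Fin n) K) ^ i = monomial (i • d) 1 := by
    intro i; rw [monomial_pow, one_pow]
  rw [Polynomial.eval_eq_sum_range, hdeg'] at heval
  have hterm : ∀ i ∈ Finset.range (m + 1),
      MvPolynomial.coeff (m • d) (p.coeff i * (monomial d 1 : MvPolynomial (Fin n) K) ^ i)
        = MvPolynomial.coeff ((m - i) • d) (p.coeff i) := by
    intro i hi
    have hi' : i ≤ m := by have := Finset.mem_range.mp hi; omega
    rw [hux i, show m • d = (m - i) • d + i • d by rw [← add_smul]; congr 1; omega,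
      MvPolynomial.coeff_mul_monomial, mul_one]
  have hco0 := congrArg (MvPolynomial.coeff (m • d)) heval
  rw [MvPolynomial.coeff_sum, MvPolynomial.coeff_zero,
    Finset.sum_congr rfl hterm] at hco0
  rw [Finset.sum_range_succ] at hco0
  have hlast : MvPolynomial.coeff ((m - m) • d) (p.coeff m) = 1 := by
    have hcm : p.coeff m = 1 := by rw [← hdeg']; exact hmo
    rw [Nat.sub_self, zero_smul, hcm]
    simp
  rw [hlast] at hco0
  have hsum : ∑ i ∈ Finset.range m,
      MvPolynomial.coeff ((m - i) • d) (p.coeff i) = -1 :=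
    eq_neg_of_add_eq_zero_left hco0
  have hex : ∃ i ∈ Finset.range m,
      MvPolynomial.coeff ((m - i) • d) (p.coeff i) ≠ 0 := by
    apply Finset.exists_ne_zero_of_sum_ne_zero
    rw [hsum]; exact neg_ne_zero.mpr one_ne_zero
  obtain ⟨i, hi, hkne⟩ := hex
  have him : i < m := Finset.mem_range.mp hi
  refine ⟨m - i, by omega, by omega, ?_⟩
  obtain ⟨A, hA⟩ := hI
  have hpow : I ^ (m - i) = Ideal.span
      (((fun d => (monomial d 1 : MvPolynomial (Fin n) K)) '' A) ^ (m - i)) := by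
    rw [hA]; exact Submodule.span_pow _ _
  have hSmono : ∀ f ∈ ((fun d => (monomial d 1 : MvPolynomial (Fin n) K)) '' A) ^ (m - i),
      ∃ e c, f = monomial e c := by
    generalize (m - i) = t
    induction t with
    | zero =>
      intro f hf
      rw [pow_zero] at hf
      obtain rfl : f = 1 := Set.mem_one.mp hf
      exact ⟨0, 1, by rw [monomial_zero', C_1]⟩
    | succ t ih =>
      intro f hf
      rw [pow_succ] at hf
      obtain ⟨g, hg, h, hh, rfl⟩ := Set.mem_mul.mp hf
      obtain ⟨e1, c1, rfl⟩ := ih g hg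
      obtain ⟨e0, he0, rfl⟩ := hh
      exact ⟨e1 + e0, c1 * 1, by rw [monomial_mul]⟩
  have hmem : p.coeff i ∈ I ^ (m - i) := by
    have := hcf i; rwa [hdeg'] at this
  rw [hpow] at hmem
  have hmono := monomial_coeff_mem _ hSmono hmem ((m - i) • d)
  rw [← hpow] at hmono
  have hfinal : (monomial d 1 : MvPolynomial (Fin n) K) ^ (m - i)
      = C (MvPolynomial.coeff ((m - i) • d) (p.coeff i))⁻¹
        * monomial ((m - i) • d) (MvPolynomial.coeff ((m - i) • d) (p.coeff i)) := by
    rw [hux, C_mul_monomial, inv_mul_cancel₀ hkne]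
  rw [hfinal]
  exact Ideal.mul_mem_left _ _ hmono
end

section
/- Let I be an integrally closed monomial ideal in S = K[x_1,...,x_n], i.e., I equals its integral closure. Then for every integer m ≥ 1 and every monomial prime ideal P, if P is an associated prime of S/I then P is an associated prime of S/I^m. -/
open MvPolynomial

lemma det_trick_s6 {R : Type*} [CommRing R] [IsDomain R] (I J : Ideal R)
    [Module.Finite R ↥J] (hJ : J ≠ ⊥) (x : R) (hx : ∀ y ∈ J, x * y ∈ I * J) :
    IsIntegralOverIdeal I x := by
  classical
  -- endomorphism: multiplication by x, as algebraMap into End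
  set f : Module.End R ↥J := algebraMap R (Module.End R ↥J) x with hf
  have hrange : LinearMap.range f ≤ I • (⊤ : Submodule R ↥J) := by
    rintro z ⟨y, rfl⟩
    have h1 : (↑(f y) : R) ∈ I • J := by
      have : (↑(f y) : R) = x * ↑y := by
        simp [hf, Module.algebraMap_end_apply, Submodule.coe_smul, smul_eq_mul]
      rw [this, Ideal.smul_eq_mul]
      exact hx _ y.2
    have h2 : Submodule.map J.subtype (I • (⊤ : Submodule R ↥J)) = I • J := by
      rw [Submodule.map_smul'']
      congr 1
      simp [Submodule.map_top, Submodule.range_subtype]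
    rw [← h2] at h1
    obtain ⟨w, hw, hw2⟩ := h1
    have : w = f y := Subtype.ext hw2
    rwa [← this]
  obtain ⟨p, hmonic, -, hcoeff, haeval⟩ :=
    LinearMap.exists_monic_and_coeff_mem_pow_and_aeval_eq_zero_of_range_le_smul R f I hrange
  -- evaluate: p.eval x = 0
  have heval : Polynomial.eval x p = 0 := by
    have : Polynomial.aeval f p = algebraMap R (Module.End R ↥J) (Polynomial.aeval x p) := by
      rw [hf, Polynomial.aeval_algebraMap_apply]
    rw [haeval] at this
    have h0 : (Polynomial.aeval x p : R) = Polynomial.eval x p :=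
      congrFun (Polynomial.coe_aeval_eq_eval x) p
    obtain ⟨y, hy⟩ : ∃ y : ↥J, (y : R) ≠ 0 := by
      by_contra h
      push_neg at h
      apply hJ
      ext z
      simp only [Submodule.mem_bot]
      constructor
      · intro hz; exact h ⟨z, hz⟩
      · rintro rfl; exact J.zero_mem
    have := congrArg (fun g : Module.End R ↥J => (↑(g y) : R)) this.symm
    simp only [Module.algebraMap_end_apply, Submodule.coe_smul, smul_eq_mul,
      LinearMap.zero_apply, ZeroMemClass.coe_zero] at this
    rcases mul_eq_zero.mp this with h | h
    · rwa [← h0]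
    · exact absurd h hy
  set k := p.natDegree with hk
  have hk0 : 0 < k := by
    rcases Nat.eq_zero_or_pos k with h | h
    · exfalso
      have : p = 1 := Polynomial.eq_one_of_monic_natDegree_zero hmonic h
      rw [this] at heval
      simp at heval
    · exact h
  refine ⟨k, hk0, fun i => p.coeff (k - i), fun i hi => ?_, ?_⟩
  · obtain ⟨hi1, hi2⟩ := Finset.mem_Icc.mp hi
    have := hcoeff (k - i)
    rwa [Nat.sub_sub_self hi2] at this
  · rw [← heval, Polynomial.eval_eq_sum_range]
    rw [Finset.sum_range_succ]
    rw [Polynomial.Monic.coeff_natDegree hmonic]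
    rw [add_comm, one_mul]
    congr 1
    rw [eq_comm]
    apply Finset.sum_nbij' (fun i => k - i) (fun j => k - j)
    · intro i hi
      have := Finset.mem_range.mp hi
      exact Finset.mem_Icc.mpr ⟨by omega, by omega⟩
    · intro j hj
      obtain ⟨h1, h2⟩ := Finset.mem_Icc.mp hj
      exact Finset.mem_range.mpr (by omega)
    · intro i hi
      have := Finset.mem_range.mp hi
      omega
    · intro j hj
      obtain ⟨h1, h2⟩ := Finset.mem_Icc.mp hj
      omega
    · intro i hi
      have h2 := Finset.mem_range.mp hi
      have h3 : k - (k - i) = i := by omega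
      simp only [h3]

/-- if `I` is an integrally closed monomial ideal, then every monomial
prime `P` associated to `S/I` is associated to `S/I^m` for all `m ≥ 1`. -/
theorem ass_subset_ass_pow {n : ℕ} {K : Type*} [Field K]
    (I : Ideal (MvPolynomial (Fin n) K)) (hI : IsMonomialIdeal I)
    (hic : ∀ f, IsIntegralOverIdeal I f → f ∈ I)
    (P : Ideal (MvPolynomial (Fin n) K)) (hP : IsMonomialIdeal P) (hPp : P.IsPrime)
    (m : ℕ) (hm : 1 ≤ m)
    (hass : IsAssociatedPrime P (MvPolynomial (Fin n) K ⧸ I)) :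
    IsAssociatedPrime P (MvPolynomial (Fin n) K ⧸ I ^ m) := by
  classical
  set S := MvPolynomial (Fin n) K
  obtain ⟨-, x, hx⟩ := isAssociatedPrime_iff.mp hass
  obtain ⟨f, rfl⟩ := Ideal.Quotient.mk_surjective x
  have hPf : ∀ r, r ∈ P ↔ r * f ∈ I := by
    intro r
    rw [hx, Submodule.mem_colon_singleton, Submodule.mem_bot]
    show Ideal.Quotient.mk I (r * f) = 0 ↔ _
    exact Ideal.Quotient.eq_zero_iff_mem
  by_cases hI0 : I = ⊥
  · have hIm : I ^ m = I := by
      rw [hI0]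
      rw [← Ideal.zero_eq_bot, zero_pow (by omega : m ≠ 0)]
    rw [hIm]
    exact isAssociatedPrime_iff.mpr ⟨hPp, Ideal.Quotient.mk I f, hx⟩
  · set J : Ideal S := I ^ (m - 1) with hJdef
    have hmulJ : I * J = I ^ m := by
      rw [hJdef, ← pow_succ']
      congr 1
      omega
    have hJ : J ≠ ⊥ := by
      obtain ⟨a, haI, ha0⟩ := (Submodule.ne_bot_iff I).mp hI0
      exact (Submodule.ne_bot_iff J).mpr
        ⟨a ^ (m - 1), Ideal.pow_mem_pow haI _, pow_ne_zero _ ha0⟩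
    have key : ∀ z : S, (∀ y ∈ J, z * y ∈ I ^ m) → z ∈ I := by
      intro z hz
      exact hic z (det_trick_s6 I J hJ z (fun y hy => by rw [hmulJ]; exact hz y hy))
    obtain ⟨s, hs⟩ : ∃ s : Finset S, Ideal.span ↑s = J := (IsNoetherian.noetherian J)
    -- Step A
    have stepA : ∀ g ∈ J, ∀ r ∈ P, r * (f * g) ∈ I ^ m := by
      intro g hg r hr
      rw [← hmulJ, ← mul_assoc]
      exact Ideal.mul_mem_mul ((hPf r).mp hr) hg
    -- Step B
    have stepB : ∃ g ∈ s, ∀ r : S, r * (f * g) ∈ I ^ m → r ∈ P := by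
      by_contra hcon
      push_neg at hcon
      choose xg hxg1 hxg2 using hcon
      set X : S := ∏ g ∈ s.attach, xg g g.2 with hX
      have hXP : X ∉ P := by
        rw [hX, Ideal.IsPrime.prod_mem_iff]
        rintro ⟨g, -, hg⟩
        exact hxg2 g g.2 hg
      have hXf : ∀ y ∈ J, (X * f) * y ∈ I ^ m := by
        intro y hy
        have hJT : J ≤ (I ^ m).colon (Ideal.span {X * f}) := by
          rw [← hs, Ideal.span_le]
          intro g hg
          rw [SetLike.mem_coe, Submodule.mem_colon_span_singleton, smul_eq_mul]
          have h1 : xg g hg * (f * g) ∈ I ^ m := hxg1 g hg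
          have h2 : X = (∏ g' ∈ s.attach.erase ⟨g, hg⟩, xg g' g'.2) * xg g hg := by
            rw [hX, ← Finset.prod_erase_mul _ _ (Finset.mem_attach _ ⟨g, hg⟩)]
          rw [h2]
          have : g * ((∏ g' ∈ s.attach.erase ⟨g, hg⟩, xg g' g'.2) * xg g hg * f)
              = (∏ g' ∈ s.attach.erase ⟨g, hg⟩, xg g' g'.2) * (xg g hg * (f * g)) := by
            ring
          rw [this]
          exact Ideal.mul_mem_left _ _ h1
        have := hJT hy
        rw [Submodule.mem_colon_span_singleton, smul_eq_mul] at this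
        rw [mul_comm]
        exact this
      exact hXP ((hPf X).mpr (key (X * f) hXf))
    obtain ⟨g, hgs, hg⟩ := stepB
    have hgJ : g ∈ J := by rw [← hs]; exact Ideal.subset_span hgs
    refine isAssociatedPrime_iff.mpr ⟨hPp, Ideal.Quotient.mk (I ^ m) (f * g), ?_⟩
    ext r
    rw [Submodule.mem_colon_singleton, Submodule.mem_bot]
    show r ∈ P ↔ Ideal.Quotient.mk (I ^ m) (r * (f * g)) = 0
    rw [Ideal.Quotient.eq_zero_iff_mem]
    exact ⟨fun hr => stepA g hgJ r hr, hg r⟩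
end

section
/- Let I ⊆ S = K[x_1,...,x_n] be a monomial ideal, let x_1 be a variable, and set S_1 = K[x_2,...,x_n], I_1 = I ∩ S_1 and I_1' = (I : x_1). Then as K-vector spaces, I decomposes as the direct sum of I_1 and x_1·I_1', and consequently sdepth_S(I) ≥ min{sdepth_{S_1}(I_1), sdepth_S(I_1')}. -/
open MvPolynomial

def InCone {n : ℕ} (p : (Fin n →₀ ℕ) × Finset (Fin n)) (d : Fin n →₀ ℕ) : Prop :=
  ∃ e : Fin n →₀ ℕ, (e.support : Set (Fin n)) ⊆ ↑p.2 ∧ d = p.1 + e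

/-- A Stanley decomposition of `I/J` over the polynomial subring on the variables in
`V`: the cones `x^a·K[Z]` with `Z ⊆ V` partition the monomials of `I \ J` supported
in `V`. -/
def IsSDecompOn {n : ℕ} {K : Type*} [Field K] (V : Finset (Fin n))
    (I J : Ideal (MvPolynomial (Fin n) K))
    (D : Finset ((Fin n →₀ ℕ) × Finset (Fin n))) : Prop :=
  (∀ p ∈ D, p.2 ⊆ V) ∧
    (∀ d : Fin n →₀ ℕ,
      (d.support ⊆ V ∧ (monomial d 1 : MvPolynomial (Fin n) K) ∈ I ∧
        (monomial d 1 : MvPolynomial (Fin n) K) ∉ J) ↔ ∃ p ∈ D, InCone p d) ∧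
    (∀ p ∈ D, ∀ q ∈ D, ∀ d, InCone p d → InCone q d → p = q)

/-- Stanley depth of `I/J` over the polynomial subring on the variables in `V`. -/
noncomputable def sdepthOn {n : ℕ} (K : Type*) [Field K] (V : Finset (Fin n))
    (I J : Ideal (MvPolynomial (Fin n) K)) : ℕ∞ :=
  ⨆ D : {D : Finset ((Fin n →₀ ℕ) × Finset (Fin n)) // IsSDecompOn V I J D},
    ⨅ p : ↥D.1, ((p.1.2.card : ℕ∞))

section Aux

variable {n : ℕ} {K : Type*} [Field K]

lemma aux_monomial_ne_bot (d : Fin n →₀ ℕ) :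
    (monomial d 1 : MvPolynomial (Fin n) K) ∉ (⊥ : Ideal (MvPolynomial (Fin n) K)) := by
  intro h
  rw [Ideal.mem_bot, monomial_eq_zero] at h
  exact one_ne_zero h

lemma aux_combine (I I1 I1' : Ideal (MvPolynomial (Fin n) K)) (i : Fin n)
    (hle : I1 ≤ I)
    (hmem1 : ∀ d : Fin n →₀ ℕ, d i = 0 → (monomial d 1 : MvPolynomial (Fin n) K) ∈ I →
      (monomial d 1 : MvPolynomial (Fin n) K) ∈ I1)
    (hmem' : ∀ e : Fin n →₀ ℕ, (monomial e 1 : MvPolynomial (Fin n) K) ∈ I1' ↔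
      (monomial (e + Finsupp.single i 1) 1 : MvPolynomial (Fin n) K) ∈ I)
    (D1 D2 : Finset ((Fin n →₀ ℕ) × Finset (Fin n)))
    (h1 : IsSDecompOn (Finset.univ.erase i) I1 ⊥ D1)
    (h2 : IsSDecompOn Finset.univ I1' ⊥ D2) :
    IsSDecompOn Finset.univ I ⊥
      (D1 ∪ D2.image (fun p => (p.1 + Finsupp.single i 1, p.2))) := by
  obtain ⟨-, hcov1, hdis1⟩ := h1
  obtain ⟨-, hcov2, hdis2⟩ := h2
  have hD1zero : ∀ r ∈ D1, ∀ d, InCone r d → d i = 0 := by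
    intro r hr d hc
    have hsub := ((hcov1 d).mpr ⟨r, hr, hc⟩).1
    by_contra h
    exact (Finset.mem_erase.mp (hsub (Finsupp.mem_support_iff.mpr h))).1 rfl
  have hShift : ∀ (r : (Fin n →₀ ℕ) × Finset (Fin n)) (d : Fin n →₀ ℕ),
      InCone (r.1 + Finsupp.single i 1, r.2) d → d i ≠ 0 := by
    rintro r d ⟨f, hf, hef⟩ h
    rw [hef] at h
    simp only [Finsupp.add_apply, Finsupp.single_eq_same] at h
    omega
  refine ⟨fun p _ => Finset.subset_univ _, fun d => ?_, ?_⟩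
  · constructor
    · rintro ⟨-, hdI, -⟩
      by_cases hdi : d i = 0
      · have hsupp : d.support ⊆ Finset.univ.erase i := by
          intro j hj
          rw [Finset.mem_erase]
          refine ⟨?_, Finset.mem_univ _⟩
          rintro rfl
          exact (Finsupp.mem_support_iff.mp hj) hdi
        obtain ⟨p, hp, hc⟩ := (hcov1 d).mp ⟨hsupp, hmem1 d hdi hdI, aux_monomial_ne_bot d⟩
        exact ⟨p, Finset.mem_union_left _ hp, hc⟩
      · have hd : d - Finsupp.single i 1 + Finsupp.single i 1 = d :=
          tsub_add_cancel_of_le (Finsupp.single_le_iff.mpr (Nat.one_le_iff_ne_zero.mpr hdi))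
        have hmem : (monomial (d - Finsupp.single i 1) 1 : MvPolynomial (Fin n) K) ∈ I1' :=
          (hmem' _).mpr (by rw [hd]; exact hdI)
        obtain ⟨p, hp, f, hf, hef⟩ :=
          (hcov2 _).mp ⟨Finset.subset_univ _, hmem, aux_monomial_ne_bot _⟩
        refine ⟨(p.1 + Finsupp.single i 1, p.2),
          Finset.mem_union_right _ (Finset.mem_image_of_mem _ hp), f, hf, ?_⟩
        show d = p.1 + Finsupp.single i 1 + f
        rw [← hd, hef, add_right_comm]
    · rintro ⟨p, hp, hc⟩
      refine ⟨Finset.subset_univ _, ?_, aux_monomial_ne_bot d⟩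
      rcases Finset.mem_union.mp hp with hp1 | hp2
      · exact hle ((hcov1 d).mpr ⟨p, hp1, hc⟩).2.1
      · obtain ⟨q, hq, rfl⟩ := Finset.mem_image.mp hp2
        obtain ⟨f, hf, hef⟩ := hc
        dsimp only at hef
        have hmemq : (monomial (q.1 + f) 1 : MvPolynomial (Fin n) K) ∈ I1' :=
          ((hcov2 _).mpr ⟨q, hq, ⟨f, hf, rfl⟩⟩).2.1
        have h2 := (hmem' _).mp hmemq
        rwa [add_right_comm, ← hef] at h2
  · rintro p hp q hq d hcp hcq
    rcases Finset.mem_union.mp hp with hp1 | hp2 <;> rcases Finset.mem_union.mp hq with hq1 | hq2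
    · exact hdis1 p hp1 q hq1 d hcp hcq
    · obtain ⟨b, hb, rfl⟩ := Finset.mem_image.mp hq2
      exact absurd (hD1zero p hp1 d hcp) (hShift b d hcq)
    · obtain ⟨a, ha, rfl⟩ := Finset.mem_image.mp hp2
      exact absurd (hD1zero q hq1 d hcq) (hShift a d hcp)
    · obtain ⟨a, ha, rfl⟩ := Finset.mem_image.mp hp2
      obtain ⟨b, hb, rfl⟩ := Finset.mem_image.mp hq2
      obtain ⟨f, hf, hef⟩ := hcp
      obtain ⟨g, hg, heg⟩ := hcq
      dsimp only at hef heg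
      have hcancel : a.1 + f = b.1 + g := by
        have : a.1 + f + Finsupp.single i 1 = b.1 + g + Finsupp.single i 1 := by
          rw [add_right_comm, ← hef, heg, add_right_comm]
        exact add_right_cancel this
      have hab : a = b := hdis2 a ha b hb (a.1 + f) ⟨f, hf, rfl⟩ ⟨g, hg, hcancel⟩
      rw [hab]

lemma aux_min_iSup_le {α β : Type*} (f : α → ℕ∞) (g : β → ℕ∞) (c : ℕ∞)
    (h : ∀ a b, min (f a) (g b) ≤ c) : min (⨆ a, f a) (⨆ b, g b) ≤ c := by
  have heq : min (⨆ a, f a) (⨆ b, g b) = ⨆ a, ⨆ b, min (f a) (g b) := by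
    simp only [iSup_inf_eq, inf_iSup_eq]
    exact iSup_comm
  rw [heq]
  exact iSup_le fun a => iSup_le fun b => h a b

end Aux

set_option maxHeartbeats 1000000 in
/-- writing `I₁ = I ∩ S₁` (the monomials of `I` not involving `x_i`)
and `I₁' = (I : x_i)`, the ideal `I` decomposes as a `K`-vector space as
`I = I₁ ⊕ x_i·I₁'`, and `sdepth_S I ≥ min { sdepth_{S₁} I₁, sdepth_S I₁' }`. -/
theorem sdepth_splitting {n : ℕ} {K : Type*} [Field K]
    (I : Ideal (MvPolynomial (Fin n) K)) (hI : IsMonomialIdeal I) (i : Fin n)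
    (I1 : Ideal (MvPolynomial (Fin n) K))
    (hI1 : I1 = Ideal.span {m : MvPolynomial (Fin n) K | ∃ d : Fin n →₀ ℕ,
      d i = 0 ∧ (monomial d 1 : MvPolynomial (Fin n) K) ∈ I ∧ m = monomial d 1})
    (I1' : Ideal (MvPolynomial (Fin n) K))
    (hI1' : I1' = I.colon ((Ideal.span {X i} : Ideal (MvPolynomial (Fin n) K)) : Set (MvPolynomial (Fin n) K))) :
    (Submodule.restrictScalars K I =
        Submodule.span K {m : MvPolynomial (Fin n) K | ∃ d : Fin n →₀ ℕ,
          d i = 0 ∧ (monomial d 1 : MvPolynomial (Fin n) K) ∈ I ∧ m = monomial d 1} ⊔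
        Submodule.map (LinearMap.mulLeft K (X i : MvPolynomial (Fin n) K))
          (Submodule.restrictScalars K I1') ∧
      Disjoint
        (Submodule.span K {m : MvPolynomial (Fin n) K | ∃ d : Fin n →₀ ℕ,
          d i = 0 ∧ (monomial d 1 : MvPolynomial (Fin n) K) ∈ I ∧ m = monomial d 1})
        (Submodule.map (LinearMap.mulLeft K (X i : MvPolynomial (Fin n) K))
          (Submodule.restrictScalars K I1'))) ∧
    min (sdepthOn K (Finset.univ.erase i) I1 ⊥) (sdepthOn K Finset.univ I1' ⊥) ≤
      sdepthOn K Finset.univ I ⊥ := by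
  have hX : (X i : MvPolynomial (Fin n) K) = monomial (Finsupp.single i 1) 1 := rfl
  obtain ⟨A, hA⟩ := hI
  -- monomials of `I`
  have hmonI : ∀ d : Fin n →₀ ℕ,
      ((monomial d 1 : MvPolynomial (Fin n) K) ∈ I ↔ ∃ a ∈ A, a ≤ d) := by
    intro d
    rw [hA, mem_ideal_span_monomial_image]
    simp [support_monomial]
  have hmem' : ∀ e : Fin n →₀ ℕ, ((monomial e 1 : MvPolynomial (Fin n) K) ∈ I1' ↔
      (monomial (e + Finsupp.single i 1) 1 : MvPolynomial (Fin n) K) ∈ I) := by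
    intro e
    rw [hI1', Ideal.mem_colon_span_singleton, hX, monomial_mul, mul_one]
  constructor
  · constructor
    · -- the K-vector space decomposition
      apply le_antisymm
      · intro f hf
        have hf' : ∀ d ∈ f.support, (monomial d 1 : MvPolynomial (Fin n) K) ∈ I := by
          intro d hd
          rw [hA] at hf
          obtain ⟨a, ha, had⟩ := mem_ideal_span_monomial_image.mp hf d hd
          exact (hmonI d).mpr ⟨a, ha, had⟩
        rw [f.as_sum]
        refine Submodule.sum_mem _ fun d hd => ?_
        have hmono : (monomial d (coeff d f) : MvPolynomial (Fin n) K)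
            = coeff d f • monomial d 1 := by
          rw [smul_monomial, smul_eq_mul, mul_one]
        rw [hmono]
        refine Submodule.smul_mem _ _ ?_
        by_cases hdi : d i = 0
        · exact Submodule.mem_sup_left (Submodule.subset_span ⟨d, hdi, hf' d hd, rfl⟩)
        · have hd' : d - Finsupp.single i 1 + Finsupp.single i 1 = d :=
            tsub_add_cancel_of_le (Finsupp.single_le_iff.mpr (Nat.one_le_iff_ne_zero.mpr hdi))
          have hmem : (monomial (d - Finsupp.single i 1) 1 : MvPolynomial (Fin n) K) ∈ I1' :=
            (hmem' _).mpr (by rw [hd']; exact hf' d hd)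
          refine Submodule.mem_sup_right ⟨monomial (d - Finsupp.single i 1) 1, hmem, ?_⟩
          show (X i : MvPolynomial (Fin n) K) * monomial (d - Finsupp.single i 1) 1
            = monomial d 1
          rw [hX, monomial_mul, one_mul, add_comm, hd']
      · refine sup_le ?_ ?_
        · rw [Submodule.span_le]
          rintro m ⟨d, -, hdI, rfl⟩
          exact hdI
        · rintro f ⟨g, hg, rfl⟩
          have hgI : g ∈ I1' := hg
          rw [hI1', Ideal.mem_colon_span_singleton] at hgI
          show (X i : MvPolynomial (Fin n) K) * g ∈ I
          rwa [mul_comm]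
    · -- disjointness
      rw [Submodule.disjoint_def]
      intro f hfM hfX
      have hP : Submodule.span K {m : MvPolynomial (Fin n) K | ∃ d : Fin n →₀ ℕ,
            d i = 0 ∧ (monomial d 1 : MvPolynomial (Fin n) K) ∈ I ∧ m = monomial d 1} ≤
          ({ carrier := {f : MvPolynomial (Fin n) K | ∀ d : Fin n →₀ ℕ, d i ≠ 0 → coeff d f = 0},
             add_mem' := fun ha hb d hd => by
               rw [coeff_add, ha d hd, hb d hd, add_zero],
             zero_mem' := fun d _ => coeff_zero d,
             smul_mem' := fun c g hg d hd => by
               rw [coeff_smul, hg d hd, smul_zero] } : Submodule K (MvPolynomial (Fin n) K)) := by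
        rw [Submodule.span_le]
        rintro m ⟨e, hei, -, rfl⟩ d hdi
        rw [coeff_monomial, if_neg]
        rintro rfl
        exact hdi hei
      have h1 : ∀ d : Fin n →₀ ℕ, d i ≠ 0 → coeff d f = 0 := hP hfM
      obtain ⟨g, hg, rfl⟩ := hfX
      have h2 : ∀ d : Fin n →₀ ℕ, d i = 0 →
          coeff d ((LinearMap.mulLeft K (X i : MvPolynomial (Fin n) K)) g) = 0 := by
        intro d hdi
        show coeff d ((X i : MvPolynomial (Fin n) K) * g) = 0
        rw [coeff_X_mul', if_neg]
        simp [Finsupp.mem_support_iff, hdi]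
      ext d
      rw [coeff_zero]
      by_cases hdi : d i = 0
      · exact h2 d hdi
      · exact h1 d hdi
  · -- the Stanley depth inequality
    have hle : I1 ≤ I := by
      rw [hI1, Ideal.span_le]
      rintro m ⟨d, -, hdI, rfl⟩
      exact hdI
    have hmem1 : ∀ d : Fin n →₀ ℕ, d i = 0 → (monomial d 1 : MvPolynomial (Fin n) K) ∈ I →
        (monomial d 1 : MvPolynomial (Fin n) K) ∈ I1 := by
      intro d h0 hdI
      rw [hI1]
      exact Ideal.subset_span ⟨d, h0, hdI, rfl⟩
    rw [sdepthOn, sdepthOn, sdepthOn]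
    apply aux_min_iSup_le
    rintro ⟨D1, h1⟩ ⟨D2, h2⟩
    have hDdec : IsSDecompOn Finset.univ I ⊥
        (D1 ∪ D2.image (fun p => (p.1 + Finsupp.single i 1, p.2))) :=
      aux_combine I I1 I1' i hle hmem1 hmem' D1 D2 h1 h2
    refine le_trans ?_ (le_iSup
      (fun D : {D : Finset ((Fin n →₀ ℕ) × Finset (Fin n)) // IsSDecompOn Finset.univ I ⊥ D} =>
        ⨅ p : ↥D.1, ((p.1.2.card : ℕ∞)))
      ⟨D1 ∪ D2.image (fun p => (p.1 + Finsupp.single i 1, p.2)), hDdec⟩)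
    refine le_iInf ?_
    rintro ⟨p, hp⟩
    rcases Finset.mem_union.mp hp with h | h
    · exact le_trans (min_le_left _ _) (iInf_le _ (⟨p, h⟩ : ↥D1))
    · obtain ⟨q, hq, rfl⟩ := Finset.mem_image.mp h
      exact le_trans (min_le_right _ _) (iInf_le _ (⟨q, hq⟩ : ↥D2))
end
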